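/- arXiv:2512.09273 — 2 statements merged into one kernel-verified Lean document; each statement's English description precedes it below -/
import Mathlib

section
/- For positive integers g, h, m, the g·h·m × g·h·m matrix V = σ_e²·(I_g⊗I_h⊗I_m) + σ_α²·(I_g⊗J_h⊗J_m) + σ_β²·(J_g⊗I_h⊗J_m) + σ_γ²·(I_g⊗I_h⊗J_m), with σ_e² > 0 and σ_α², σ_β², σ_γ² ≥ 0, has inverse V⁻¹ = (1/λ₀)[I_g⊗I_h⊗(I_m − J̄_m)] + (1/λ₇)[(I_g − J̄_g)⊗(I_h − J̄_h)⊗J̄_m] + (1/λ₃)[(I_g − J̄_g)⊗J̄_h⊗J̄_m] + (1/λ₅)[J̄_g⊗(I_h − J̄_h)⊗J̄_m] + (1/λ₁)[J̄_g⊗J̄_h⊗J̄_m], where λ₀ = σ_e², λ₇ = σ_e² + m σ_γ², λ₃ = σ_e² + m σ_γ² + h m σ_α², λ₅ = σ_e² + m σ_γ² + g m σ_β², λ₁ = σ_e² + m σ_γ² + h m σ_α² + g m σ_β². -/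
open Matrix Kronecker

/-- The a×a all-ones matrix. -/
def Jmat (a : ℕ) : Matrix (Fin a) (Fin a) ℝ := Matrix.of fun _ _ => 1
/-- The averaging matrix J̄ₐ = (1/a)·Jₐ. -/
noncomputable def Jbar (a : ℕ) : Matrix (Fin a) (Fin a) ℝ := ((a : ℝ)⁻¹) • Jmat a

lemma Jmat_mul_Jmat (a : ℕ) : Jmat a * Jmat a = (a : ℝ) • Jmat a := by
  ext i j; simp [Jmat, Matrix.mul_apply]

lemma Jbar_mul_Jbar (a : ℕ) (ha : 0 < a) : Jbar a * Jbar a = Jbar a := by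
  have h : (a:ℝ) ≠ 0 := Nat.cast_ne_zero.mpr ha.ne'
  rw [Jbar, Matrix.smul_mul, Matrix.mul_smul, Jmat_mul_Jmat, smul_smul, smul_smul]
  field_simp

lemma Jbar_mul_sub (a : ℕ) (ha : 0 < a) : Jbar a * (1 - Jbar a) = 0 := by
  rw [Matrix.mul_sub, Matrix.mul_one, Jbar_mul_Jbar a ha, sub_self]

lemma sub_mul_Jbar (a : ℕ) (ha : 0 < a) : (1 - Jbar a) * Jbar a = 0 := by
  rw [Matrix.sub_mul, Matrix.one_mul, Jbar_mul_Jbar a ha, sub_self]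

lemma Jmat_eq_smul (a : ℕ) (ha : 0 < a) : Jmat a = (a:ℝ) • Jbar a := by
  rw [Jbar, smul_smul, mul_inv_cancel₀ (Nat.cast_ne_zero.mpr ha.ne'), one_smul]

lemma sub_kron {a b c d : Type*} (A B : Matrix a b ℝ) (C : Matrix c d ℝ) :
    (A - B) ⊗ₖ C = A ⊗ₖ C - B ⊗ₖ C := by
  ext ⟨i,k⟩ ⟨j,l⟩; simp [Matrix.kroneckerMap_apply, sub_mul]

lemma kron_sub {a b c d : Type*} (A : Matrix a b ℝ) (B C : Matrix c d ℝ) :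
    A ⊗ₖ (B - C) = A ⊗ₖ B - A ⊗ₖ C := by
  ext ⟨i,k⟩ ⟨j,l⟩; simp [Matrix.kroneckerMap_apply, mul_sub]
lemma proj_sum' (g h m : ℕ) :
    (1:Matrix (Fin g) (Fin g) ℝ) ⊗ₖ ((1:Matrix (Fin h) (Fin h) ℝ) ⊗ₖ ((1:Matrix (Fin m) (Fin m) ℝ) - Jbar m))
    + (1 - Jbar g) ⊗ₖ ((1 - Jbar h) ⊗ₖ Jbar m)
    + (1 - Jbar g) ⊗ₖ (Jbar h ⊗ₖ Jbar m)
    + Jbar g ⊗ₖ ((1 - Jbar h) ⊗ₖ Jbar m)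
    + Jbar g ⊗ₖ (Jbar h ⊗ₖ Jbar m) = 1 := by
  simp only [kron_sub, sub_kron, Matrix.one_kronecker_one]
  abel

theorem stmt_12 (g h m : ℕ) (hg : 0 < g) (hh : 0 < h) (hm : 0 < m)
    (σe2 σα2 σβ2 σγ2 : ℝ) (hσe : 0 < σe2) (hα : 0 ≤ σα2) (hβ : 0 ≤ σβ2) (hγ : 0 ≤ σγ2) :
    let Ig : Matrix (Fin g) (Fin g) ℝ := 1
    let Ih : Matrix (Fin h) (Fin h) ℝ := 1
    let Im : Matrix (Fin m) (Fin m) ℝ := 1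
    let V : Matrix (Fin g × Fin h × Fin m) (Fin g × Fin h × Fin m) ℝ :=
      σe2 • (Ig ⊗ₖ (Ih ⊗ₖ Im)) + σα2 • (Ig ⊗ₖ (Jmat h ⊗ₖ Jmat m))
        + σβ2 • (Jmat g ⊗ₖ (Ih ⊗ₖ Jmat m)) + σγ2 • (Ig ⊗ₖ (Ih ⊗ₖ Jmat m))
    let lam0 : ℝ := σe2
    let lam7 : ℝ := σe2 + m * σγ2
    let lam3 : ℝ := σe2 + m * σγ2 + h * m * σα2
    let lam5 : ℝ := σe2 + m * σγ2 + g * m * σβ2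
    let lam1 : ℝ := σe2 + m * σγ2 + h * m * σα2 + g * m * σβ2
    let W : Matrix (Fin g × Fin h × Fin m) (Fin g × Fin h × Fin m) ℝ :=
      (1 / lam0) • (Ig ⊗ₖ (Ih ⊗ₖ (Im - Jbar m)))
        + (1 / lam7) • ((Ig - Jbar g) ⊗ₖ ((Ih - Jbar h) ⊗ₖ Jbar m))
        + (1 / lam3) • ((Ig - Jbar g) ⊗ₖ (Jbar h ⊗ₖ Jbar m))
        + (1 / lam5) • (Jbar g ⊗ₖ ((Ih - Jbar h) ⊗ₖ Jbar m))
        + (1 / lam1) • (Jbar g ⊗ₖ (Jbar h ⊗ₖ Jbar m))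
    V * W = 1 ∧ W * V = 1 := by
  intro Ig Ih Im V lam0 lam7 lam3 lam5 lam1 W
  have hgm : (0:ℝ) < (g:ℝ) * m := by positivity
  have hhm : (0:ℝ) < (h:ℝ) * m := by positivity
  have h0 : lam0 ≠ 0 := ne_of_gt hσe
  have h7 : lam7 ≠ 0 := by unfold lam7; positivity
  have h3 : lam3 ≠ 0 := by unfold lam3; positivity
  have h5 : lam5 ≠ 0 := by unfold lam5; positivity
  have h1 : lam1 ≠ 0 := by unfold lam1; positivity
  have hone := proj_sum' g h m
  constructor <;>
  · unfold V W Ig Ih Im lam0 lam7 lam3 lam5 lam1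
    rw [Jmat_eq_smul g hg, Jmat_eq_smul h hh, Jmat_eq_smul m hm]
    simp only [Matrix.smul_kronecker, Matrix.kronecker_smul, Matrix.add_mul, Matrix.mul_add,
      Matrix.smul_mul, Matrix.mul_smul, ← Matrix.mul_kronecker_mul,
      Matrix.one_mul, Matrix.mul_one, Jbar_mul_Jbar _ hg, Jbar_mul_Jbar _ hh, Jbar_mul_Jbar _ hm,
      Jbar_mul_sub _ hg, Jbar_mul_sub _ hh, Jbar_mul_sub _ hm,
      sub_mul_Jbar _ hg, sub_mul_Jbar _ hh, sub_mul_Jbar _ hm,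
      Matrix.zero_kronecker, Matrix.kronecker_zero, smul_zero, add_zero, zero_add, smul_smul]
    rw [← hone]
    match_scalars <;>
    · simp only [lam0, lam7, lam3, lam5, lam1] at h0 h7 h3 h5 h1
      field_simp
      try ring
end

section
/- For positive integers g, h, m with σ_e² > 0 and σ_α², σ_β², σ_γ² ≥ 0, the eigenvalues of the matrix V = σ_e²·I_{ghm} + σ_α²·(I_g⊗J_h⊗J_m) + σ_β²·(J_g⊗I_h⊗J_m) + σ_γ²·(I_g⊗I_h⊗J_m) are exactly σ_e² (with multiplicity gh(m−1)), σ_e² + mσ_γ² (with multiplicity (g−1)(h−1)), σ_e² + mσ_γ² + hmσ_α² (with multiplicity g−1), σ_e² + mσ_γ² + gmσ_β² (with multiplicity h−1), and σ_e² + mσ_γ² + hmσ_α² + gmσ_β² (with multiplicity 1). -/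
open Matrix Kronecker Polynomial

namespace S14

def Pm (a : ℕ) : Matrix (Fin a) (Fin a) ℝ :=
  Matrix.of fun i j => (if i = j then 1 else 0) - (if i.val = j.val + 1 then 1 else 0)

def Qm (a : ℕ) : Matrix (Fin a) (Fin a) ℝ := Matrix.of fun i k => if k ≤ i then 1 else 0

def Um (a : ℕ) : Matrix (Fin a) (Fin a) ℝ :=
  Matrix.of fun i j => if j.val = a - 1 then (i.val + 1 : ℝ) else 0

lemma sum_if_val (a c : ℕ) (f : Fin a → ℝ) :
    (∑ j : Fin a, if j.val = c then f j else 0) = if hc : c < a then f ⟨c, hc⟩ else 0 := by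
  split
  case isTrue hc =>
    rw [Finset.sum_eq_single (⟨c, hc⟩ : Fin a)]
    · simp
    · intro b _ hb
      exact if_neg fun hv => hb (Fin.ext hv)
    · simp
  case isFalse hc =>
    refine Finset.sum_eq_zero fun b _ => if_neg fun hv => hc ?_
    have := b.isLt; omega

lemma QP (a : ℕ) : Qm a * Pm a = 1 := by
  ext i k
  simp only [Matrix.mul_apply, Qm, Pm, Matrix.of_apply]
  have step : ∀ j : Fin a, (if j ≤ i then (1:ℝ) else 0) *
      ((if j = k then (1:ℝ) else 0) - (if j.val = k.val + 1 then 1 else 0))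
      = (if j.val = k.val then (if j ≤ i then (1:ℝ) else 0) else 0)
        - (if j.val = k.val + 1 then (if j ≤ i then (1:ℝ) else 0) else 0) := by
    intro j
    simp only [Fin.ext_iff, Fin.le_def]
    split_ifs <;> (first | ring1 | (exfalso; omega))
  rw [Finset.sum_congr rfl (fun j _ => step j), Finset.sum_sub_distrib, sum_if_val, sum_if_val]
  have hik := i.isLt
  have hkk := k.isLt
  have hone : (1 : Matrix (Fin a) (Fin a) ℝ) i k = if i.val = k.val then 1 else 0 := by
    simp [Matrix.one_apply, Fin.ext_iff]
  rw [hone]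
  simp only [Fin.le_def, Fin.ext_iff]
  split_ifs <;> (first | ring1 | (exfalso; omega))

lemma PQ (a : ℕ) : Pm a * Qm a = 1 := mul_eq_one_comm.mp (QP a)

lemma JP (a : ℕ) : Jmat a * Pm a = Pm a * Um a := by
  ext i k
  simp only [Matrix.mul_apply, Jmat, Pm, Um, Matrix.of_apply, one_mul]
  have hik := i.isLt
  have hkk := k.isLt
  have lhs_eq : (∑ j : Fin a, ((if j = k then (1:ℝ) else 0) - (if j.val = k.val + 1 then 1 else 0)))
      = if k.val = a - 1 then (1:ℝ) else 0 := by
    have step : ∀ j : Fin a, ((if j = k then (1:ℝ) else 0) - (if j.val = k.val + 1 then 1 else 0))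
        = (if j.val = k.val then (1:ℝ) else 0) - (if j.val = k.val + 1 then (1:ℝ) else 0) := by
      intro j
      simp only [Fin.ext_iff]
    rw [Finset.sum_congr rfl (fun j _ => step j), Finset.sum_sub_distrib, sum_if_val, sum_if_val,
      dif_pos hkk]
    split_ifs <;> (first | ring1 | (exfalso; omega))
  have rhs_eq : (∑ j : Fin a, ((if i = j then (1:ℝ) else 0) - (if i.val = j.val + 1 then 1 else 0)) *
      (if k.val = a - 1 then ((j : Fin a).val + 1 : ℝ) else 0))
      = if k.val = a - 1 then (1:ℝ) else 0 := by
    by_cases hk : k.val = a - 1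
    · rw [Finset.sum_congr rfl (fun j _ => by rw [if_pos hk]), if_pos hk]
      have step : ∀ j : Fin a, ((if i = j then (1:ℝ) else 0) - (if i.val = j.val + 1 then 1 else 0)) *
          ((j:Fin a).val + 1 : ℝ)
          = (if j.val = i.val then ((j:Fin a).val + 1 : ℝ) else 0)
            - (if i.val = j.val + 1 then ((j:Fin a).val + 1 : ℝ) else 0) := by
        intro j
        simp only [Fin.ext_iff]
        split_ifs <;> (first | ring1 | (exfalso; omega))
      rw [Finset.sum_congr rfl (fun j _ => step j), Finset.sum_sub_distrib, sum_if_val, dif_pos hik]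
      by_cases hi : i.val = 0
      · rw [Finset.sum_eq_zero (fun b _ => if_neg (by omega))]
        simp [hi]
      · have step2 : ∀ j : Fin a, (if i.val = (j:Fin a).val + 1 then ((j:Fin a).val + 1 : ℝ) else 0)
            = (if (j:Fin a).val = i.val - 1 then ((j:Fin a).val + 1 : ℝ) else 0) := by
          intro j
          split_ifs <;> (first | rfl | (exfalso; omega))
        rw [Finset.sum_congr rfl (fun j _ => step2 j), sum_if_val, dif_pos (by omega)]
        push_cast
        have : ((i.val - 1 : ℕ) : ℝ) = (i.val : ℝ) - 1 := by
          rw [Nat.cast_sub (by omega)]; norm_num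
        rw [this]; ring
    · rw [Finset.sum_eq_zero (fun b _ => by rw [if_neg hk, mul_zero]), if_neg hk]
  rw [lhs_eq, rhs_eq]



lemma charpoly_conj {n : Type*} [DecidableEq n] [Fintype n] (P Q M : Matrix n n ℝ)
    (hQP : Q * P = 1) : (Q * M * P).charpoly = M.charpoly := by
  have hmap : Q.map C * P.map C = 1 := by
    rw [← Matrix.map_mul, hQP, Matrix.map_one _ (map_zero C) (map_one C)]
  have key : charmatrix (Q * M * P) = Q.map C * charmatrix M * P.map C := by
    rw [charmatrix, charmatrix, Matrix.mul_sub, Matrix.sub_mul]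
    congr 1
    · have hc : Q.map C * Matrix.scalar n (X : ℝ[X]) = Matrix.scalar n (X : ℝ[X]) * Q.map C :=
        (Matrix.scalar_commute (X : ℝ[X]) (fun r' => Commute.all _ _) (Q.map C)).symm
      rw [hc, mul_assoc, hmap, mul_one]
    · simp only [RingHom.mapMatrix_apply]
      rw [← Matrix.map_mul, ← Matrix.map_mul]
  rw [Matrix.charpoly, Matrix.charpoly, key, Matrix.det_mul, Matrix.det_mul]
  have hdet : (Q.map C).det * (P.map C).det = 1 := by
    rw [← Matrix.det_mul, hmap, Matrix.det_one]
  calc (Q.map C).det * (charmatrix M).det * (P.map C).det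
      = (charmatrix M).det * ((Q.map C).det * (P.map C).det) := by ring
    _ = (charmatrix M).det := by rw [hdet, mul_one]

lemma prod_fin_ite (a : ℕ) (ha : 0 < a) (F G : Polynomial ℝ) :
    (∏ k : Fin a, if k.val = a - 1 then F else G) = F * G ^ (a - 1) := by
  rw [Finset.prod_ite, Finset.prod_const, Finset.prod_const]
  have h1 : Finset.filter (fun k : Fin a => k.val = a - 1) Finset.univ = {⟨a - 1, by omega⟩} := by
    ext x
    simp [Fin.ext_iff]
  have h2 : (Finset.filter (fun k : Fin a => ¬ k.val = a - 1) Finset.univ).card = a - 1 := by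
    have := Finset.card_filter_add_card_filter_not (s := (Finset.univ : Finset (Fin a)))
      (p := fun k : Fin a => k.val = a - 1)
    rw [h1] at this
    simp at this ⊢
    omega
  rw [h1, h2]
  simp

lemma big_prod (g h m : ℕ) (hg : 0 < g) (hh : 0 < h) (hm : 0 < m) (σe2 σα2 σβ2 σγ2 : ℝ) :
    (∏ a : Fin g × Fin h × Fin m,
      (X - C (σe2 + σα2 * (if a.2.1.val = h - 1 ∧ a.2.2.val = m - 1 then (h : ℝ) * m else 0)
        + σβ2 * (if a.1.val = g - 1 ∧ a.2.2.val = m - 1 then (g : ℝ) * m else 0)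
        + σγ2 * (if a.2.2.val = m - 1 then (m : ℝ) else 0))))
    = (X - C σe2) ^ (g * h * (m - 1))
        * (X - C (σe2 + m * σγ2)) ^ ((g - 1) * (h - 1))
        * (X - C (σe2 + m * σγ2 + h * m * σα2)) ^ (g - 1)
        * (X - C (σe2 + m * σγ2 + g * m * σβ2)) ^ (h - 1)
        * (X - C (σe2 + m * σγ2 + h * m * σα2 + g * m * σβ2)) := by
  rw [Fintype.prod_prod_type]
  have inner : ∀ i : Fin g,
      (∏ b : Fin h × Fin m, (X - C (σe2 + σα2 * (if b.1.val = h - 1 ∧ b.2.val = m - 1 then (h : ℝ) * m else 0)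
        + σβ2 * (if i.val = g - 1 ∧ b.2.val = m - 1 then (g : ℝ) * m else 0)
        + σγ2 * (if b.2.val = m - 1 then (m : ℝ) else 0))))
      = ((X - C ((σe2 + ↑m * σγ2 + ↑h * ↑m * σα2) + σβ2 * (if i.val = g - 1 then (g:ℝ)*m else 0)))
          * (X - C ((σe2 + ↑m * σγ2) + σβ2 * (if i.val = g - 1 then (g:ℝ)*m else 0))) ^ (h-1))
        * ((X - C σe2) ^ (m - 1)) ^ h := by
    intro i
    rw [Fintype.prod_prod_type]
    have innk : ∀ j : Fin h,
        (∏ k : Fin m, (X - C (σe2 + σα2 * (if j.val = h - 1 ∧ k.val = m - 1 then (h : ℝ) * m else 0)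
          + σβ2 * (if i.val = g - 1 ∧ k.val = m - 1 then (g : ℝ) * m else 0)
          + σγ2 * (if k.val = m - 1 then (m : ℝ) else 0))))
        = (X - C ((σe2 + ↑m * σγ2 + σβ2 * (if i.val = g - 1 then (g:ℝ)*m else 0))
             + σα2 * (if j.val = h - 1 then (h:ℝ)*m else 0)))
          * (X - C σe2) ^ (m - 1) := by
      intro j
      rw [← prod_fin_ite m hm]
      refine Finset.prod_congr rfl fun k _ => ?_
      have : (σe2 + σα2 * (if j.val = h - 1 ∧ k.val = m - 1 then (h : ℝ) * m else 0)
          + σβ2 * (if i.val = g - 1 ∧ k.val = m - 1 then (g : ℝ) * m else 0)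
          + σγ2 * (if k.val = m - 1 then (m : ℝ) else 0))
          = if k.val = m - 1 then ((σe2 + ↑m * σγ2 + σβ2 * (if i.val = g - 1 then (g:ℝ)*m else 0))
             + σα2 * (if j.val = h - 1 then (h:ℝ)*m else 0)) else σe2 := by
        split_ifs <;> (first | ring1 | tauto)
      rw [this, apply_ite (fun c : ℝ => X - C c)]
    rw [Finset.prod_congr rfl fun j _ => innk j, Finset.prod_mul_distrib, Finset.prod_const]
    congr 1
    · rw [← prod_fin_ite h hh]
      refine Finset.prod_congr rfl fun j _ => ?_
      by_cases hj : j.val = h - 1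
      · rw [if_pos hj, if_pos hj]
        congr 2
        ring
      · rw [if_neg hj, if_neg hj]
        congr 2
        ring
    · rw [Finset.card_univ, Fintype.card_fin]
  rw [Finset.prod_congr rfl fun i _ => inner i, Finset.prod_mul_distrib,
    Finset.prod_mul_distrib, Finset.prod_const, Finset.prod_pow, Finset.card_univ, Fintype.card_fin]
  have p1 : (∏ i : Fin g, (X - C ((σe2 + ↑m * σγ2 + ↑h * ↑m * σα2)
      + σβ2 * (if i.val = g - 1 then (g:ℝ)*m else 0))))
      = (X - C (σe2 + ↑m * σγ2 + ↑h * ↑m * σα2 + ↑g * ↑m * σβ2))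
        * (X - C (σe2 + ↑m * σγ2 + ↑h * ↑m * σα2)) ^ (g - 1) := by
    rw [← prod_fin_ite g hg]
    refine Finset.prod_congr rfl fun i _ => ?_
    by_cases hi : i.val = g - 1
    · rw [if_pos hi, if_pos hi]; congr 2; ring
    · rw [if_neg hi, if_neg hi]; congr 2; ring
  have p2 : (∏ i : Fin g, (X - C ((σe2 + ↑m * σγ2)
      + σβ2 * (if i.val = g - 1 then (g:ℝ)*m else 0))))
      = (X - C (σe2 + ↑m * σγ2 + ↑g * ↑m * σβ2))
        * (X - C (σe2 + ↑m * σγ2)) ^ (g - 1) := by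
    rw [← prod_fin_ite g hg]
    refine Finset.prod_congr rfl fun i _ => ?_
    by_cases hi : i.val = g - 1
    · rw [if_pos hi, if_pos hi]; congr 2; ring
    · rw [if_neg hi, if_neg hi]; congr 2; ring
  rw [p1, p2, mul_pow, ← pow_mul, ← pow_mul, ← pow_mul]
  have e1 : (m-1)*(h*g) = g*h*(m-1) := by ring
  have e2 : (g-1)*(h-1) = (g-1)*(h-1) := rfl
  rw [e1]
  ring

lemma QJP (a : ℕ) : Qm a * Jmat a * Pm a = Um a := by
  rw [mul_assoc, JP, ← mul_assoc, QP, one_mul]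

lemma QIP (a : ℕ) : Qm a * (1 : Matrix (Fin a) (Fin a) ℝ) * Pm a = 1 := by
  rw [mul_one, QP]

section Main

variable (g h m : ℕ) (σe2 σα2 σβ2 σγ2 : ℝ)

def Tm : Matrix (Fin g × Fin h × Fin m) (Fin g × Fin h × Fin m) ℝ :=
  σe2 • 1 + σα2 • ((1 : Matrix (Fin g) (Fin g) ℝ) ⊗ₖ (Um h ⊗ₖ Um m))
    + σβ2 • (Um g ⊗ₖ ((1 : Matrix (Fin h) (Fin h) ℝ) ⊗ₖ Um m))
    + σγ2 • ((1 : Matrix (Fin g) (Fin g) ℝ) ⊗ₖ ((1 : Matrix (Fin h) (Fin h) ℝ) ⊗ₖ Um m))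

lemma tri (a b : Fin g × Fin h × Fin m)
    (hlt : b.2.2.val + m * b.2.1.val + h * m * b.1.val
      < a.2.2.val + m * a.2.1.val + h * m * a.1.val) :
    Tm g h m σe2 σα2 σβ2 σγ2 a b = 0 := by
  obtain ⟨i, j, k⟩ := a
  obtain ⟨i', j', k'⟩ := b
  simp only at hlt
  have hkm := k.isLt; have hkm' := k'.isLt
  have hjh := j.isLt; have hjh' := j'.isLt
  have hig := i.isLt; have hig' := i'.isLt
  have t1 : (1 : Matrix (Fin g × Fin h × Fin m) (Fin g × Fin h × Fin m) ℝ) (i,j,k) (i',j',k') = 0 := by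
    apply Matrix.one_apply_ne
    intro hEq
    obtain ⟨h1, h2, h3⟩ : i = i' ∧ j = j' ∧ k = k' := by simpa [Prod.ext_iff] using hEq
    subst h1; subst h2; subst h3
    omega
  have t2 : ((1 : Matrix (Fin g) (Fin g) ℝ) ⊗ₖ (Um h ⊗ₖ Um m)) (i,j,k) (i',j',k') = 0 := by
    simp only [Matrix.kroneckerMap_apply, Um, Matrix.of_apply]
    by_cases hii : i = i'
    · subst hii
      by_cases hj' : j'.val = h - 1
      · by_cases hk' : k'.val = m - 1
        · exfalso
          have b1 : m * j.val ≤ m * (h - 1) := Nat.mul_le_mul_left m (by omega)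
          have b2 : k.val ≤ m - 1 := by omega
          rw [hj', hk'] at hlt
          exact absurd hlt (not_lt.mpr (Nat.add_le_add_right (Nat.add_le_add b2 b1) _))
        · simp [hk']
      · simp [hj']
    · rw [Matrix.one_apply_ne hii, zero_mul]
  have t3 : (Um g ⊗ₖ ((1 : Matrix (Fin h) (Fin h) ℝ) ⊗ₖ Um m)) (i,j,k) (i',j',k') = 0 := by
    simp only [Matrix.kroneckerMap_apply, Um, Matrix.of_apply]
    by_cases hjj : j = j'
    · subst hjj
      by_cases hi' : i'.val = g - 1
      · by_cases hk' : k'.val = m - 1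
        · exfalso
          have b1 : h * m * i.val ≤ h * m * (g - 1) := Nat.mul_le_mul_left (h*m) (by omega)
          have b2 : k.val ≤ m - 1 := by omega
          rw [hi', hk'] at hlt
          exact absurd hlt (not_lt.mpr (Nat.add_le_add (Nat.add_le_add b2 le_rfl) b1))
        · simp [hk']
      · simp [hi']
    · rw [Matrix.one_apply_ne hjj, zero_mul, mul_zero]
  have t4 : ((1 : Matrix (Fin g) (Fin g) ℝ) ⊗ₖ ((1 : Matrix (Fin h) (Fin h) ℝ) ⊗ₖ Um m)) (i,j,k) (i',j',k') = 0 := by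
    simp only [Matrix.kroneckerMap_apply, Um, Matrix.of_apply]
    by_cases hii : i = i'
    · by_cases hjj : j = j'
      · subst hii; subst hjj
        by_cases hk' : k'.val = m - 1
        · exfalso
          have b2 : k.val ≤ m - 1 := by omega
          rw [hk'] at hlt
          exact absurd hlt (not_lt.mpr (Nat.add_le_add_right (Nat.add_le_add_right b2 _) _))
        · simp [hk']
      · rw [Matrix.one_apply_ne hjj, zero_mul, mul_zero]
    · rw [Matrix.one_apply_ne hii, zero_mul]
  simp only [Tm, Matrix.add_apply, Matrix.smul_apply, t1, t2, t3, t4, smul_zero, add_zero]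

lemma diagTm (hg : 0 < g) (hh : 0 < h) (hm : 0 < m) (a : Fin g × Fin h × Fin m) :
    Tm g h m σe2 σα2 σβ2 σγ2 a a
      = σe2 + σα2 * (if a.2.1.val = h - 1 ∧ a.2.2.val = m - 1 then (h : ℝ) * m else 0)
        + σβ2 * (if a.1.val = g - 1 ∧ a.2.2.val = m - 1 then (g : ℝ) * m else 0)
        + σγ2 * (if a.2.2.val = m - 1 then (m : ℝ) else 0) := by
  obtain ⟨i, j, k⟩ := a
  have cg : i.val = g - 1 → ((i.val : ℝ) + 1) = (g : ℝ) := by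
    intro hv; rw [hv]; rw [Nat.cast_sub (by omega)]; norm_num
  have ch : j.val = h - 1 → ((j.val : ℝ) + 1) = (h : ℝ) := by
    intro hv; rw [hv]; rw [Nat.cast_sub (by omega)]; norm_num
  have cm : k.val = m - 1 → ((k.val : ℝ) + 1) = (m : ℝ) := by
    intro hv; rw [hv]; rw [Nat.cast_sub (by omega)]; norm_num
  simp only [Tm, Matrix.add_apply, Matrix.smul_apply, Matrix.kroneckerMap_apply,
    Matrix.one_apply_eq, Um, Matrix.of_apply, smul_eq_mul]
  congr 1
  · congr 1
    · congr 1
      · ring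
      · congr 1
        split_ifs with h1 h2 h2 h3 h3 <;>
          first
          | (rw [ch h1.1, cm h1.2]) | (exfalso; tauto)
          | (simp_all)
    · congr 1
      split_ifs with h1 h2 h2 h3 h3 <;>
        first
        | (rw [cg h1.1, cm h1.2]) | (exfalso; tauto)
        | (simp_all)
  · congr 1
    split_ifs with h1 <;> simp_all

end Main
end S14

open S14 in
theorem stmt_14 (g h m : ℕ) (hg : 0 < g) (hh : 0 < h) (hm : 0 < m)
    (σe2 σα2 σβ2 σγ2 : ℝ) (hσe : 0 < σe2) (hα : 0 ≤ σα2) (hβ : 0 ≤ σβ2) (hγ : 0 ≤ σγ2) :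
    let Ig : Matrix (Fin g) (Fin g) ℝ := 1
    let Ih : Matrix (Fin h) (Fin h) ℝ := 1
    let Im : Matrix (Fin m) (Fin m) ℝ := 1
    let V : Matrix (Fin g × Fin h × Fin m) (Fin g × Fin h × Fin m) ℝ :=
      σe2 • (1 : Matrix (Fin g × Fin h × Fin m) (Fin g × Fin h × Fin m) ℝ)
        + σα2 • (Ig ⊗ₖ (Jmat h ⊗ₖ Jmat m))
        + σβ2 • (Jmat g ⊗ₖ (Ih ⊗ₖ Jmat m)) + σγ2 • (Ig ⊗ₖ (Ih ⊗ₖ Jmat m))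
    V.charpoly =
      (X - C σe2) ^ (g * h * (m - 1))
        * (X - C (σe2 + m * σγ2)) ^ ((g - 1) * (h - 1))
        * (X - C (σe2 + m * σγ2 + h * m * σα2)) ^ (g - 1)
        * (X - C (σe2 + m * σγ2 + g * m * σβ2)) ^ (h - 1)
        * (X - C (σe2 + m * σγ2 + h * m * σα2 + g * m * σβ2)) := by
  intro Ig Ih Im V
  set PP := Pm g ⊗ₖ (Pm h ⊗ₖ Pm m) with hPPdef
  set QQ := Qm g ⊗ₖ (Qm h ⊗ₖ Qm m) with hQQdef
  have hQP : QQ * PP = 1 := by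
    rw [hQQdef, hPPdef, ← Matrix.mul_kronecker_mul, ← Matrix.mul_kronecker_mul, QP, QP, QP,
      Matrix.one_kronecker_one, Matrix.one_kronecker_one]
  have hV : V = σe2 • (1 : Matrix (Fin g × Fin h × Fin m) (Fin g × Fin h × Fin m) ℝ)
        + σα2 • ((1 : Matrix (Fin g) (Fin g) ℝ) ⊗ₖ (Jmat h ⊗ₖ Jmat m))
        + σβ2 • (Jmat g ⊗ₖ ((1 : Matrix (Fin h) (Fin h) ℝ) ⊗ₖ Jmat m))
        + σγ2 • ((1 : Matrix (Fin g) (Fin g) ℝ) ⊗ₖ ((1 : Matrix (Fin h) (Fin h) ℝ) ⊗ₖ Jmat m)) := rfl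
  have hconj : QQ * V * PP = Tm g h m σe2 σα2 σβ2 σγ2 := by
    have c1 : QQ * (σe2 • (1 : Matrix (Fin g × Fin h × Fin m) (Fin g × Fin h × Fin m) ℝ)) * PP
        = σe2 • (1 : Matrix (Fin g × Fin h × Fin m) (Fin g × Fin h × Fin m) ℝ) := by
      rw [mul_smul_comm, smul_mul_assoc, mul_one, hQP]
    have c2 : QQ * (σα2 • ((1 : Matrix (Fin g) (Fin g) ℝ) ⊗ₖ (Jmat h ⊗ₖ Jmat m))) * PP
        = σα2 • ((1 : Matrix (Fin g) (Fin g) ℝ) ⊗ₖ (Um h ⊗ₖ Um m)) := by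
      rw [mul_smul_comm, smul_mul_assoc, hQQdef, hPPdef,
        ← Matrix.mul_kronecker_mul, ← Matrix.mul_kronecker_mul,
        ← Matrix.mul_kronecker_mul, ← Matrix.mul_kronecker_mul,
        QIP, QJP, QJP]
    have c3 : QQ * (σβ2 • (Jmat g ⊗ₖ ((1 : Matrix (Fin h) (Fin h) ℝ) ⊗ₖ Jmat m))) * PP
        = σβ2 • (Um g ⊗ₖ ((1 : Matrix (Fin h) (Fin h) ℝ) ⊗ₖ Um m)) := by
      rw [mul_smul_comm, smul_mul_assoc, hQQdef, hPPdef,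
        ← Matrix.mul_kronecker_mul, ← Matrix.mul_kronecker_mul,
        ← Matrix.mul_kronecker_mul, ← Matrix.mul_kronecker_mul,
        QIP, QJP, QJP]
    have c4 : QQ * (σγ2 • ((1 : Matrix (Fin g) (Fin g) ℝ) ⊗ₖ ((1 : Matrix (Fin h) (Fin h) ℝ) ⊗ₖ Jmat m))) * PP
        = σγ2 • ((1 : Matrix (Fin g) (Fin g) ℝ) ⊗ₖ ((1 : Matrix (Fin h) (Fin h) ℝ) ⊗ₖ Um m)) := by
      rw [mul_smul_comm, smul_mul_assoc, hQQdef, hPPdef,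
        ← Matrix.mul_kronecker_mul, ← Matrix.mul_kronecker_mul,
        ← Matrix.mul_kronecker_mul, ← Matrix.mul_kronecker_mul,
        QIP, QIP, QJP]
    rw [hV, Matrix.mul_add, Matrix.mul_add, Matrix.mul_add,
      Matrix.add_mul, Matrix.add_mul, Matrix.add_mul, c1, c2, c3, c4, Tm]
  have hcp : V.charpoly = (Tm g h m σe2 σα2 σβ2 σγ2).charpoly := by
    rw [← hconj, charpoly_conj PP QQ V hQP]
  set T := Tm g h m σe2 σα2 σβ2 σγ2 with hT
  let e : (Fin g × Fin h × Fin m) ≃ Fin (g * (h * m)) :=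
    ((Equiv.refl (Fin g)).prodCongr finProdFinEquiv).trans finProdFinEquiv
  have hval : ∀ a : Fin g × Fin h × Fin m,
      ((e a : Fin (g * (h * m))) : ℕ) = a.2.2.val + m * a.2.1.val + h * m * a.1.val := by
    rintro ⟨i, j, k⟩
    simp only [e, Equiv.trans_apply, Equiv.prodCongr_apply, Equiv.coe_refl, Prod.map,
      finProdFinEquiv_apply_val, id_eq]
    try ring
  have htri : (Matrix.reindex e e T).BlockTriangular id := by
    intro p q hlt
    simp only [Matrix.reindex_apply, Matrix.submatrix_apply, id_eq] at *
    apply tri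
    have hp := hval (e.symm p)
    have hq := hval (e.symm q)
    rw [Equiv.apply_symm_apply] at hp hq
    rw [← hp, ← hq]
    exact hlt
  calc V.charpoly = T.charpoly := hcp
    _ = (Matrix.reindex e e T).charpoly := (Matrix.charpoly_reindex e T).symm
    _ = ∏ p : Fin (g * (h * m)), (X - C ((Matrix.reindex e e T) p p)) :=
        Matrix.charpoly_of_upperTriangular _ htri
    _ = ∏ a : Fin g × Fin h × Fin m, (X - C (T a a)) := by
        rw [← Equiv.prod_comp e (fun p => X - C ((Matrix.reindex e e T) p p))]
        refine Finset.prod_congr rfl fun a _ => ?_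
        simp only [Matrix.reindex_apply, Matrix.submatrix_apply, Equiv.symm_apply_apply]
    _ = _ := by
        rw [Finset.prod_congr rfl fun a _ => by
          rw [hT, diagTm g h m σe2 σα2 σβ2 σγ2 hg hh hm a]]
        exact big_prod g h m hg hh hm σe2 σα2 σβ2 σγ2
end
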